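/- Let $K$ be a field, let $g \geq 2$ be an integer, and let $a_1, \dots, a_g \in K$ with $a_1 \neq 0$. Set $y = a_1 x + a_2 x^2 + \cdots + a_g x^g \in K[x]$. If $\kappa = 1 + k_1 x + \cdots + k_g x^g \in K[x]$ satisfies that the coefficient of $x^g$ in $\kappa \cdot y^n$ is zero for every $0 \leq n \leq g-1$, then $k_1 = -(g-1) a_2 / a_1$. -/

import Mathlib

open Polynomial

open Finset
lemma Icc_succ_left_aux (a b : ℕ) : Icc a.succ b = Ioc a b := Finset.Icc_add_one_left_eq_Ioc a b

lemma coeff_pow_aux {K : Type*} [Field K] (a b : K) (m j : ℕ) :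
    ((C a * X + C b * X ^ 2) ^ m).coeff j =
      ∑ i ∈ range (m + 1),
        (a ^ i * b ^ (m - i) * (m.choose i : K)) *
          (if i + 2 * (m - i) = j then 1 else 0) := by
  rw [add_pow, finset_sum_coeff]
  refine Finset.sum_congr rfl fun i hi => ?_
  have h : (C a * X) ^ i * (C b * X ^ 2) ^ (m - i) * ((m.choose i : ℕ) : K[X]) =
      C (a ^ i * b ^ (m - i) * (m.choose i : K)) * X ^ (i + 2 * (m - i)) := by
    rw [← C_eq_natCast, mul_pow, mul_pow, ← C_pow, ← C_pow, ← pow_mul, pow_add,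
      C_mul, C_mul]
    ring
  rw [h, coeff_C_mul, coeff_X_pow]
  simp [eq_comm]

/-- If `y = a₁x + ⋯ + a_g x^g` with `a₁ ≠ 0` and `κ = 1 + k₁x + ⋯ + k_g x^g`
satisfies that the coefficient of `x^g` in `κ · yⁿ` vanishes for `0 ≤ n ≤ g-1`,
then `k₁ = -(g-1)·a₂/a₁`. -/
theorem dualizing_gluing_datum_k1
    (K : Type*) [Field K] (g : ℕ) (hg : 2 ≤ g) (a : ℕ → K) (ha : a 1 ≠ 0)
    (k : ℕ → K)
    (hκ : ∀ n : ℕ, n ≤ g - 1 →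
      (((1 : K[X]) + ∑ i ∈ Finset.Icc 1 g, C (k i) * X ^ i) *
          (∑ i ∈ Finset.Icc 1 g, C (a i) * X ^ i) ^ n).coeff g = 0) :
    k 1 = -((g : K) - 1) * a 2 / a 1 := by
  obtain ⟨m, rfl⟩ : ∃ m, g = m + 1 := ⟨g - 1, by omega⟩
  have hm : 1 ≤ m := by omega
  set q : K[X] := C (a 1) * X + C (a 2) * X ^ 2 with hqdef
  set y : K[X] := ∑ i ∈ Icc 1 (m + 1), C (a i) * X ^ i with hydef
  set s : K[X] := ∑ i ∈ Icc 3 (m + 1), C (a i) * X ^ i with hsdef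
  have hpair : q = ∑ i ∈ Ioc 0 2, C (a i) * X ^ i := by
    rw [show Finset.Ioc 0 2 = {1, 2} from rfl, Finset.sum_insert (by decide),
      Finset.sum_singleton, pow_one]
  have hys : y = q + s := by
    rw [hydef, hsdef, hpair, Icc_succ_left_aux,
      show (3 : ℕ) = Nat.succ 2 from rfl, Icc_succ_left_aux,
      Finset.sum_Ioc_consecutive _ (by omega) (by omega)]
  have hXdvd : ∀ (c : ℕ → K) (l r n : ℕ), n ≤ l →
      (X : K[X]) ^ n ∣ ∑ i ∈ Icc l r, C (c i) * X ^ i := by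
    intro c l r n hn
    refine Finset.dvd_sum fun i hi => Dvd.dvd.mul_left ?_ _
    exact pow_dvd_pow _ (le_trans hn (Finset.mem_Icc.mp hi).1)
  have hXy : (X : K[X]) ∣ y := by
    simpa using hXdvd a 1 (m + 1) 1 le_rfl
  have hXq : (X : K[X]) ∣ q := ⟨C (a 1) + C (a 2) * X, by ring⟩
  have hdiff : (X : K[X]) ^ (m + 2) ∣ y ^ m - q ^ m := by
    rw [← geom_sum₂_mul]
    have h1 : (X : K[X]) ^ (m - 1) ∣ ∑ i ∈ range m, y ^ i * q ^ (m - 1 - i) := by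
      refine Finset.dvd_sum fun i hi => ?_
      have : (X : K[X]) ^ (m - 1) = X ^ i * X ^ (m - 1 - i) := by
        rw [← pow_add]; congr 1; simp only [Finset.mem_range] at hi; omega
      rw [this]
      exact mul_dvd_mul (pow_dvd_pow_of_dvd hXy i) (pow_dvd_pow_of_dvd hXq _)
    have h2 : (X : K[X]) ^ 3 ∣ y - q := by
      rw [hys, add_sub_cancel_left]; exact hXdvd a 3 (m + 1) 3 le_rfl
    have : (X : K[X]) ^ (m + 2) = X ^ (m - 1) * X ^ 3 := by
      rw [← pow_add]; congr 1; omega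
    rw [this]
    exact mul_dvd_mul h1 h2
  have hcoeff_eq : ∀ j, j ≤ m + 1 → (y ^ m).coeff j = (q ^ m).coeff j := by
    intro j hj
    have h := (X_pow_dvd_iff.mp hdiff) j (by omega)
    rw [coeff_sub, sub_eq_zero] at h
    exact h
  -- coefficients of q ^ m
  have hq0 : (q ^ m).coeff m = a 1 ^ m := by
    rw [hqdef, coeff_pow_aux]
    rw [Finset.sum_eq_single m]
    · simp
    · intro i hi hne
      simp only [Finset.mem_range] at hi
      rw [if_neg (by omega)]; ring
    · simp
  have hq1 : (q ^ m).coeff (m + 1) = (m : K) * a 1 ^ (m - 1) * a 2 := by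
    rw [hqdef, coeff_pow_aux]
    rw [Finset.sum_eq_single (m - 1)]
    · rw [if_pos (by omega), show m - (m - 1) = 1 by omega, pow_one,
        Nat.choose_symm hm, Nat.choose_one_right]
      ring
    · intro i hi hne
      simp only [Finset.mem_range] at hi
      rw [if_neg (by omega)]; ring
    · intro h; exact absurd (Finset.mem_range.mpr (by omega)) h
  -- decompose κ
  have hκ1 : (1 : K[X]) + ∑ i ∈ Icc 1 (m + 1), C (k i) * X ^ i =
      1 + C (k 1) * X + ∑ i ∈ Icc 2 (m + 1), C (k i) * X ^ i := by
    rw [Icc_succ_left_aux, show (2 : ℕ) = Nat.succ 1 from rfl, Icc_succ_left_aux,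
      ← Finset.sum_Ioc_consecutive (fun i => C (k i) * X ^ i) (show 0 ≤ 1 by omega) (show 1 ≤ m + 1 by omega)]
    rw [show Finset.Ioc 0 1 = {1} from rfl, Finset.sum_singleton, pow_one, add_assoc]
  have key := hκ m (by omega)
  rw [hκ1, add_mul, add_mul, coeff_add, coeff_add, one_mul] at key
  have hz : ((∑ i ∈ Icc 2 (m + 1), C (k i) * X ^ i) * y ^ m).coeff (m + 1) = 0 := by
    have hd : (X : K[X]) ^ (m + 2) ∣ (∑ i ∈ Icc 2 (m + 1), C (k i) * X ^ i) * y ^ m := by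
      have : (X : K[X]) ^ (m + 2) = X ^ 2 * X ^ m := by rw [← pow_add]; congr 1; omega
      rw [this]
      exact mul_dvd_mul (hXdvd k 2 (m + 1) 2 le_rfl) (pow_dvd_pow_of_dvd hXy m)
    exact (X_pow_dvd_iff.mp hd) (m + 1) (by omega)
  have hmid : (C (k 1) * X * y ^ m).coeff (m + 1) = k 1 * (y ^ m).coeff m := by
    rw [mul_assoc, coeff_C_mul, coeff_X_mul]
  rw [hz, hmid, hcoeff_eq (m + 1) le_rfl, hcoeff_eq m (by omega), hq0, hq1] at key
  -- key : m * a1^(m-1) * a2 + k1 * a1^m + 0 = 0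
  have hpow : a 1 ^ m = a 1 ^ (m - 1) * a 1 := by
    rw [← pow_succ]; congr 1; omega
  have hane : a 1 ^ (m - 1) ≠ 0 := pow_ne_zero _ ha
  push_cast
  rw [add_sub_cancel_right]
  rw [hpow] at key
  rw [eq_div_iff ha]
  have h2 : a 1 ^ (m - 1) * (k 1 * a 1) = a 1 ^ (m - 1) * (-(m : K) * a 2) := by
    linear_combination key
  have h3 := mul_left_cancel₀ hane h2
  linear_combination h3
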